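/- Let ξ₁, …, ξ_n be independent centered real-valued random variables with E|ξ_i|^p < ∞ for some p ≥ 2. Then (E|Σ_{i=1}^n ξ_i|^p)^{1/p} ≤ C · (p / ln p) · max( (Σ E ξ_i²)^{1/2}, (Σ E|ξ_i|^p)^{1/p} ) for an absolute constant C, i.e., the Rosenthal constant in the L^p inequality for sums of independent centered random variables grows as p/ln p. -/

import Mathlib

set_option maxHeartbeats 1000000

open MeasureTheory Real Set ProbabilityTheory
open scoped ENNReal NNReal

lemma exp_quad (x : ℝ) : Real.exp x ≤ 1 + x + x ^ 2 * Real.exp |x| := by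
  have key : ∀ y : ℝ, Real.exp y - 1 ≤ y * Real.exp y := by
    intro y
    have h := Real.add_one_le_exp (-y)
    have := mul_le_mul_of_nonneg_left h (Real.exp_pos y).le
    rw [← Real.exp_add] at this
    simp at this
    nlinarith [Real.exp_pos y]
  rcases le_or_gt 0 x with hx | hx
  · rw [abs_of_nonneg hx]
    have h1 := key x
    have h2 : Real.exp x - 1 - x ≤ x * (Real.exp x - 1) := by nlinarith
    nlinarith [Real.exp_pos x]
  · rw [abs_of_neg hx]
    have h1 : Real.exp x ≤ 1 + x + x ^ 2 := by
      have hx1 : 0 < 1 - x := by linarith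
      have h2 : Real.exp x ≤ 1 / (1 - x) := by
        have h3 := Real.add_one_le_exp (-x)
        have h4 : 1 - x ≤ Real.exp (-x) := by linarith
        rw [le_div_iff₀ hx1]
        calc Real.exp x * (1 - x) ≤ Real.exp x * Real.exp (-x) :=
              mul_le_mul_of_nonneg_left h4 (Real.exp_pos x).le
          _ = 1 := by rw [← Real.exp_add]; simp
      have h4 : 1 / (1 - x) ≤ 1 + x + x ^ 2 := by
        rw [div_le_iff₀ hx1]; nlinarith
      linarith
    have h5 : (1:ℝ) ≤ Real.exp (-x) := Real.one_le_exp (by linarith)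
    nlinarith [sq_nonneg x]

lemma one_sub_inv_le_log (x : ℝ) (hx : 0 < x) : 1 - 1/x ≤ Real.log x := by
  have h := Real.log_le_sub_one_of_pos (show (0:ℝ) < 1/x by positivity)
  rw [Real.log_div one_ne_zero hx.ne', Real.log_one] at h
  linarith

lemma log_le_rpow8 (p : ℝ) (hp : 0 < p) : Real.log p ≤ 8 * p ^ (8⁻¹ : ℝ) := by
  have h1 : Real.log p = 8 * Real.log (p ^ (8⁻¹ : ℝ)) := by
    rw [Real.log_rpow hp]; ring
  have h2 : Real.log (p ^ (8⁻¹ : ℝ)) ≤ p ^ (8⁻¹ : ℝ) - 1 :=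
    Real.log_le_sub_one_of_pos (Real.rpow_pos_of_pos hp _)
  have h3 : (0:ℝ) < p ^ (8⁻¹ : ℝ) := Real.rpow_pos_of_pos hp _
  nlinarith

lemma log_region (p : ℝ) (hp : 2 ≤ p) (z : ℝ) (hz0 : Real.log p / (4 * p) ≤ z) (hz1 : z ≤ 1) :
    z ≤ Real.log (6 * (p / Real.log p) * z) := by
  have hp0 : (0:ℝ) < p := by linarith
  have hlp : 0 < Real.log p := Real.log_pos (by linarith)
  set x₀ : ℝ := Real.log p / (4 * p) with hx₀def
  have hx₀pos : 0 < x₀ := by positivity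
  have hzpos : 0 < z := lt_of_lt_of_le hx₀pos hz0
  have hkey : 6 * (p / Real.log p) * z = (3/2) * (z / x₀) := by
    rw [hx₀def]; field_simp; ring
  rw [hkey, Real.log_mul (by norm_num) (by positivity), Real.log_div hzpos.ne' hx₀pos.ne']
  -- z ≤ log(3/2) + (log z - log x₀)
  have h1 : 1 - x₀ / z ≤ Real.log z - Real.log x₀ := by
    have := one_sub_inv_le_log (z / x₀) (by positivity)
    rw [Real.log_div hzpos.ne' hx₀pos.ne'] at this
    have hinv : 1 / (z / x₀) = x₀ / z := by field_simp
    rw [hinv] at this; exact this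
  have h2 : z - x₀ ≤ 1 - x₀ / z := by
    have : (z - x₀) * (1 - z) ≥ 0 := mul_nonneg (by linarith) (by linarith)
    have hz' : (1 - x₀/z) - (z - x₀) = (z - x₀) * (1 - z) / z := by field_simp
    nlinarith [div_nonneg (mul_nonneg (show (0:ℝ) ≤ z - x₀ by linarith) (show (0:ℝ) ≤ 1 - z by linarith)) hzpos.le]
  have h3 : x₀ ≤ 1/4 := by
    rw [hx₀def, div_le_iff₀ (by positivity)]
    have := Real.log_le_sub_one_of_pos hp0
    nlinarith
  have h4 : (1/4 : ℝ) ≤ Real.log (3/2) := by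
    have := one_sub_inv_le_log (3/2) (by norm_num)
    norm_num at this ⊢; linarith
  linarith

lemma scalar_core (p : ℝ) (hp : 2 ≤ p) (z w : ℝ) (hz : 0 ≤ z) (hw1 : 0 < 1 + w)
    (hwz : |w| ≤ z + z ^ 2) :
    (1 + w) ^ (p / 2) ≤ 1 + (p / 2) * w + p ^ ((5:ℝ)/2) * z ^ 2
      + (12 * (p / Real.log p)) ^ p * z ^ p := by
  have hp0 : (0:ℝ) < p := by linarith
  have hlp : 0 < Real.log p := Real.log_pos (by linarith)
  have hu1 : 1 ≤ p / Real.log p := by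
    rw [le_div_iff₀ hlp, one_mul]
    have := Real.log_le_sub_one_of_pos hp0; linarith
  have hu0 : 0 < p / Real.log p := by linarith
  set u : ℝ := p / Real.log p with hudef
  set x₀ : ℝ := Real.log p / (4 * p) with hx₀def
  have hx₀pos : 0 < x₀ := by positivity
  have hx₀14 : x₀ ≤ 1/4 := by
    rw [hx₀def, div_le_iff₀ (by positivity)]
    have := Real.log_le_sub_one_of_pos hp0; nlinarith
  have hzp_nonneg : (0:ℝ) ≤ (12 * u) ^ p * z ^ p := by positivity
  have hp52 : p ≤ p ^ ((5:ℝ)/2) := by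
    calc p = p ^ (1:ℝ) := (Real.rpow_one p).symm
    _ ≤ p ^ ((5:ℝ)/2) := Real.rpow_le_rpow_of_exponent_le (by linarith) (by norm_num)
  rcases le_or_gt z x₀ with hcase | hcase
  · -- small z : exponential quadratic bound
    have hz14 : z ≤ 1/4 := le_trans hcase hx₀14
    have hw54 : |w| ≤ (5/4) * z := by nlinarith [hwz]
    have habs : |(p/2) * w| ≤ (5/32) * Real.log p := by
      rw [abs_mul, abs_of_pos (by linarith : (0:ℝ) < p/2)]
      calc p/2 * |w| ≤ p/2 * ((5/4) * z) := by
            exact mul_le_mul_of_nonneg_left hw54 (by linarith)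
        _ ≤ p/2 * ((5/4) * x₀) := by
            apply mul_le_mul_of_nonneg_left _ (by linarith)
            exact mul_le_mul_of_nonneg_left hcase (by norm_num)
        _ = (5/32) * Real.log p := by rw [hx₀def]; field_simp; ring
    have hstep1 : (1 + w) ^ (p/2) ≤ Real.exp ((p/2) * w) := by
      have h1 : 1 + w ≤ Real.exp w := by linarith [Real.add_one_le_exp w]
      calc (1 + w) ^ (p/2) ≤ (Real.exp w) ^ (p/2) :=
            Real.rpow_le_rpow hw1.le h1 (by positivity)
        _ = Real.exp ((p/2) * w) := by
            rw [Real.rpow_def_of_pos (Real.exp_pos w), Real.log_exp]; ring_nf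
    have hstep2 := exp_quad ((p/2) * w)
    have hstep4 : Real.exp |(p/2) * w| ≤ p ^ ((1:ℝ)/2) := by
      rw [Real.rpow_def_of_pos hp0]
      apply Real.exp_le_exp.mpr
      calc |(p/2)*w| ≤ (5/32) * Real.log p := habs
        _ ≤ Real.log p * (1/2) := by linarith
    have hw2 : ((p/2) * w) ^ 2 ≤ (25/64) * (p^2 * z^2) := by
      have : w^2 ≤ (25/16) * z^2 := by nlinarith [abs_nonneg w, sq_abs w]
      nlinarith [sq_nonneg w]
    have hppow : p^2 * p ^ ((1:ℝ)/2) = p ^ ((5:ℝ)/2) := by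
      rw [← Real.rpow_natCast p 2, ← Real.rpow_add hp0]; norm_num
    have hfin : ((p/2)*w)^2 * Real.exp |(p/2)*w| ≤ p ^ ((5:ℝ)/2) * z^2 := by
      have h1 : ((p/2)*w)^2 * Real.exp |(p/2)*w| ≤ ((25/64) * (p^2*z^2)) * p ^ ((1:ℝ)/2) := by
        apply mul_le_mul hw2 hstep4 (Real.exp_pos _).le (by positivity)
      calc ((p/2)*w)^2 * Real.exp |(p/2)*w| ≤ (25/64) * (p^2*z^2) * p ^ ((1:ℝ)/2) := h1
        _ = (25/64) * (p^2 * p ^ ((1:ℝ)/2)) * z^2 := by ring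
        _ = (25/64) * p ^ ((5:ℝ)/2) * z^2 := by rw [hppow]
        _ ≤ p ^ ((5:ℝ)/2) * z^2 := by
            have h52 : (0:ℝ) ≤ p ^ ((5:ℝ)/2) := Real.rpow_nonneg hp0.le _
            nlinarith [sq_nonneg z]
    linarith
  · -- large z
    have hzpos : 0 < z := lt_trans hx₀pos hcase
    have h1w : (1 + w) ^ (p/2) ≤ (1 + z) ^ p := by
      have h1 : 1 + w ≤ (1 + z)^2 := by
        have := abs_le.mp hwz; nlinarith [this.2]
      calc (1 + w) ^ (p/2) ≤ ((1+z)^2) ^ (p/2) :=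
            Real.rpow_le_rpow hw1.le h1 (by positivity)
        _ = (1+z) ^ p := by
            rw [← Real.rpow_natCast (1+z) 2, ← Real.rpow_mul (by linarith : (0:ℝ) ≤ 1+z)]
            push_cast
            rw [show (2:ℝ) * (p/2) = p by ring]
    have hqw : -((p/2) * w) ≤ (p/2)*z + (p/2)*z^2 := by
      have := abs_le.mp hwz; nlinarith [this.1]
    rcases le_or_gt z 1 with hz1 | hz1
    · -- x₀ < z ≤ 1
      have hlog := log_region p hp z hcase.le hz1
      have h6uz : (0:ℝ) < 6 * u * z := by positivity
      have h2 : (1+z)^p ≤ (6*u*z)^p := by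
        calc (1+z)^p ≤ (Real.exp z)^p :=
              Real.rpow_le_rpow (by linarith) (by linarith [Real.add_one_le_exp z]) hp0.le
          _ = Real.exp (z * p) := by
              rw [Real.rpow_def_of_pos (Real.exp_pos z), Real.log_exp]
          _ ≤ Real.exp (Real.log (6*u*z) * p) := by
              apply Real.exp_le_exp.mpr
              exact mul_le_mul_of_nonneg_right hlog hp0.le
          _ = (6*u*z)^p := (Real.rpow_def_of_pos h6uz p).symm
      have h4 : (6*u*z)^p ≤ (1/2) * ((12*u)^p * z^p) := by
        have e1 : (6*u*z)^p = (6*u)^p * z^p := Real.mul_rpow (by positivity) hzpos.le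
        have e2 : (12*u)^p = 2^p * ((6*u)^p) := by
          rw [← Real.mul_rpow (by norm_num) (by positivity)]; norm_num; ring_nf
        have e3 : (2:ℝ) ≤ 2^p := by
          calc (2:ℝ) = 2^(1:ℝ) := (Real.rpow_one 2).symm
            _ ≤ 2^p := Real.rpow_le_rpow_of_exponent_le (by norm_num) (by linarith)
        rw [e1, e2]
        have h6up : (0:ℝ) ≤ (6*u)^p * z^p := by positivity
        nlinarith [Real.rpow_nonneg (show (0:ℝ) ≤ 6*u by positivity) p,
          Real.rpow_nonneg hzpos.le p]
      have h5 : (p/2)*z ≤ (1/2) * ((12*u)^p * z^p) := by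
        have hz_split : z^p = z^(p-1) * z := by
          rw [← Real.rpow_add_one hzpos.ne' (p-1)]; norm_num
        have h12u_split : (12*u)^p = (12*u)^(p-1) * (12*u) := by
          rw [← Real.rpow_add_one (by positivity : (12*u) ≠ 0) (p-1)]; norm_num
        have hzx : x₀^(p-1) ≤ z^(p-1) :=
          Real.rpow_le_rpow hx₀pos.le hcase.le (by linarith)
        have hux : (12*u) * x₀ = 3 := by
          rw [hudef, hx₀def]; field_simp; ring
        have h3p : (3:ℝ)^(p-1) ≥ p := by
          have e1 : (3:ℝ)^(p-1) = Real.exp (Real.log 3 * (p-1)) :=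
            Real.rpow_def_of_pos (by norm_num) (p-1)
          have hlog3 : (1:ℝ) ≤ Real.log 3 := by
            rw [Real.le_log_iff_exp_le (by norm_num : (0:ℝ) < 3)]
            exact le_of_lt (lt_of_lt_of_le Real.exp_one_lt_d9 (by norm_num))
          have := Real.add_one_le_exp (Real.log 3 * (p-1))
          have h2' : p - 1 ≤ Real.log 3 * (p - 1) := by nlinarith
          rw [e1]; linarith
        have hkey : p ≤ (12*u)^p * z^(p-1) := by
          have c1 : (12*u)^(p-1) * x₀^(p-1) = 3^(p-1) := by
            rw [← Real.mul_rpow (by positivity) hx₀pos.le, hux]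
          have c2 : (12*u)^p * x₀^(p-1) = 3^(p-1) * (12*u) := by
            rw [h12u_split]; rw [mul_comm ((12*u)^(p-1)) (12*u), mul_assoc, c1]; ring
          have c3 : (12:ℝ) ≤ 12*u := by nlinarith
          have c4 : p ≤ 3^(p-1) * (12*u) := by nlinarith [h3p]
          calc p ≤ 3^(p-1) * (12*u) := c4
            _ = (12*u)^p * x₀^(p-1) := c2.symm
            _ ≤ (12*u)^p * z^(p-1) := by
                apply mul_le_mul_of_nonneg_left hzx (by positivity)
        calc (p/2)*z ≤ (1/2) * ((12*u)^p * z^(p-1)) * z := by nlinarith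
          _ = (1/2) * ((12*u)^p * z^p) := by rw [hz_split]; ring
      have h6 : (p/2)*z^2 ≤ p ^ ((5:ℝ)/2) * z^2 := by nlinarith [sq_nonneg z]
      linarith
    · -- z > 1
      have h2 : (1+z)^p ≤ (12*u)^p * z^p := by
        calc (1+z)^p ≤ (2*z)^p := Real.rpow_le_rpow (by linarith) (by linarith) hp0.le
          _ = 2^p * z^p := Real.mul_rpow (by norm_num) hzpos.le
          _ ≤ (12*u)^p * z^p := by
              apply mul_le_mul_of_nonneg_right _ (Real.rpow_nonneg hzpos.le p)
              exact Real.rpow_le_rpow (by norm_num) (by nlinarith) hp0.le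
      have h3 : (p/2)*z + (p/2)*z^2 ≤ p ^ ((5:ℝ)/2) * z^2 := by
        have hzz : z ≤ z^2 := by nlinarith
        nlinarith [sq_nonneg z]
      linarith

lemma core_ineq (p : ℝ) (hp : 2 ≤ p) (t r x : ℝ) (ht : 0 < t) :
    (t ^ 2 + (r + x) ^ 2) ^ (p / 2) ≤ (t ^ 2 + r ^ 2) ^ (p / 2) *
      (1 + (p * r / (t ^ 2 + r ^ 2)) * x + 2 * p ^ ((5:ℝ)/2) * (x ^ 2 / t ^ 2)
        + (12 * (p / Real.log p)) ^ p * (|x| ^ p / t ^ p)) := by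
  have hp0 : (0:ℝ) < p := by linarith
  set D : ℝ := t ^ 2 + r ^ 2 with hDdef
  have hD : 0 < D := by positivity
  set w : ℝ := (2 * r * x + x ^ 2) / D with hwdef
  set z : ℝ := |x| / t with hzdef
  have hz0 : 0 ≤ z := by positivity
  have key1 : t ^ 2 + (r + x) ^ 2 = D * (1 + w) := by
    rw [hwdef, hDdef]; field_simp; ring
  have hw1 : 0 < 1 + w := by
    have h2 : 0 < t ^ 2 + (r + x) ^ 2 := by positivity
    rw [key1] at h2
    by_contra hcon
    push_neg at hcon
    nlinarith
  have hwz : |w| ≤ z + z ^ 2 := by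
    have h1 : |2 * r * x + x ^ 2| ≤ 2 * |r| * |x| + x ^ 2 := by
      calc |2 * r * x + x ^ 2| ≤ |2 * r * x| + |x ^ 2| := abs_add_le _ _
        _ = 2 * |r| * |x| + x ^ 2 := by
            rw [abs_mul, abs_mul, abs_of_nonneg (sq_nonneg x)]
            simp [abs_of_nonneg]
    have h2 : 2 * |r| * |x| / D ≤ |x| / t := by
      rw [div_le_div_iff₀ hD ht]
      have : 2 * |r| * t ≤ D := by
        rw [hDdef]; nlinarith [sq_nonneg (|r| - t), sq_abs r]
      nlinarith [abs_nonneg x]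
    have h3 : x ^ 2 / D ≤ x ^ 2 / t ^ 2 := by
      apply div_le_div_of_nonneg_left (sq_nonneg x) (by positivity)
      rw [hDdef]; nlinarith [sq_nonneg r]
    have h4 : z ^ 2 = x ^ 2 / t ^ 2 := by
      rw [hzdef, div_pow, sq_abs]
    rw [hwdef, abs_div, abs_of_pos hD, h4]
    calc |2 * r * x + x ^ 2| / D ≤ (2 * |r| * |x| + x ^ 2) / D := by
          gcongr
      _ = 2 * |r| * |x| / D + x ^ 2 / D := by ring
      _ ≤ |x| / t + x ^ 2 / t ^ 2 := add_le_add h2 h3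
  have hsc := scalar_core p hp z w hz0 hw1 hwz
  have hLHS : (t ^ 2 + (r + x) ^ 2) ^ (p/2) = D ^ (p/2) * (1 + w) ^ (p/2) := by
    rw [key1, Real.mul_rpow hD.le hw1.le]
  have hqw : (p/2) * w = (p * r / D) * x + (p/2) * (x^2 / D) := by
    rw [hwdef]; field_simp
  have hx2 : (p/2) * (x^2 / D) ≤ p ^ ((5:ℝ)/2) * (x^2 / t^2) := by
    have h1 : x^2 / D ≤ x^2 / t^2 := by
      apply div_le_div_of_nonneg_left (sq_nonneg x) (by positivity)
      rw [hDdef]; nlinarith [sq_nonneg r]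
    have h2 : p/2 ≤ p ^ ((5:ℝ)/2) := by
      calc p/2 ≤ p := by linarith
        _ = p ^ (1:ℝ) := (Real.rpow_one p).symm
        _ ≤ p ^ ((5:ℝ)/2) := Real.rpow_le_rpow_of_exponent_le (by linarith) (by norm_num)
    have hds : 0 ≤ x^2/D := by positivity
    calc (p/2) * (x^2/D) ≤ (p/2) * (x^2/t^2) :=
          mul_le_mul_of_nonneg_left h1 (by linarith)
      _ ≤ p ^ ((5:ℝ)/2) * (x^2/t^2) := mul_le_mul_of_nonneg_right h2 (by positivity)
  have hz2 : z ^ 2 = x^2 / t^2 := by rw [hzdef, div_pow, sq_abs]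
  have hzp : z ^ p = |x| ^ p / t ^ p := by
    rw [hzdef]; exact Real.div_rpow (abs_nonneg x) ht.le p
  rw [hLHS]
  apply mul_le_mul_of_nonneg_left _ (Real.rpow_nonneg hD.le _)
  calc (1 + w) ^ (p/2) ≤ 1 + (p/2) * w + p ^ ((5:ℝ)/2) * z ^ 2
      + (12 * (p / Real.log p)) ^ p * z ^ p := hsc
    _ = 1 + (p * r / D) * x + (p/2) * (x^2/D) + p ^ ((5:ℝ)/2) * (x^2/t^2)
      + (12 * (p / Real.log p)) ^ p * (|x| ^ p / t ^ p) := by rw [hqw, hz2, hzp]; ring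
    _ ≤ 1 + (p * r / D) * x + 2 * p ^ ((5:ℝ)/2) * (x ^ 2 / t ^ 2)
      + (12 * (p / Real.log p)) ^ p * (|x| ^ p / t ^ p) := by linarith

section Prob
variable {Ω : Type} [MeasurableSpace Ω] {μ : Measure Ω} [IsProbabilityMeasure μ]

lemma two_rpow_bound (p a b : ℝ) (hp : 0 ≤ p) (ha : 0 ≤ a) (hb : 0 ≤ b) :
    (a + b) ^ p ≤ 2 ^ p * (a ^ p + b ^ p) := by
  rcases le_total a b with h | h
  · calc (a + b) ^ p ≤ (2 * b) ^ p := Real.rpow_le_rpow (by linarith) (by linarith) hp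
      _ = 2 ^ p * b ^ p := Real.mul_rpow (by norm_num) hb
      _ ≤ 2 ^ p * (a ^ p + b ^ p) := by
          have := Real.rpow_nonneg ha p
          have h2 : (0:ℝ) ≤ 2 ^ p := Real.rpow_nonneg (by norm_num) p
          nlinarith
  · calc (a + b) ^ p ≤ (2 * a) ^ p := Real.rpow_le_rpow (by linarith) (by linarith) hp
      _ = 2 ^ p * a ^ p := Real.mul_rpow (by norm_num) ha
      _ ≤ 2 ^ p * (a ^ p + b ^ p) := by
          have := Real.rpow_nonneg hb p
          have h2 : (0:ℝ) ≤ 2 ^ p := Real.rpow_nonneg (by norm_num) p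
          nlinarith

lemma abs_rpow_int (p : ℝ) (hp : 2 ≤ p) (f : Ω → ℝ) (hf : MemLp f (ENNReal.ofReal p) μ) :
    Integrable (fun ω => |f ω| ^ p) μ := by
  have h0 : ENNReal.ofReal p ≠ 0 := by
    simp [ENNReal.ofReal_eq_zero]; linarith
  have := hf.integrable_norm_rpow h0 ENNReal.ofReal_ne_top
  simpa [Real.norm_eq_abs, ENNReal.toReal_ofReal (by linarith : (0:ℝ) ≤ p)] using this

lemma phi_le (p t s : ℝ) (hp : 2 ≤ p) (ht : 0 < t) :
    (t ^ 2 + s ^ 2) ^ (p / 2) ≤ 2 ^ p * (t ^ p + |s| ^ p) := by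
  have h1 : t ^ 2 + s ^ 2 ≤ (t + |s|) ^ 2 := by nlinarith [abs_nonneg s, sq_abs s]
  calc (t ^ 2 + s ^ 2) ^ (p/2) ≤ ((t + |s|) ^ 2) ^ (p/2) :=
        Real.rpow_le_rpow (by positivity) h1 (by linarith)
    _ = (t + |s|) ^ p := by
        rw [← Real.rpow_natCast (t + |s|) 2, ← Real.rpow_mul (by positivity)]
        push_cast
        rw [show (2:ℝ) * (p/2) = p by ring]
    _ ≤ 2 ^ p * (t ^ p + |s| ^ p) := two_rpow_bound p t |s| (by linarith) ht.le (abs_nonneg s)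

lemma integrable_phi (p t : ℝ) (hp : 2 ≤ p) (ht : 0 < t) (f : Ω → ℝ) (hfm : Measurable f)
    (hf : MemLp f (ENNReal.ofReal p) μ) :
    Integrable (fun ω => (t ^ 2 + f ω ^ 2) ^ (p / 2)) μ := by
  have hint : Integrable (fun ω => 2 ^ p * (t ^ p + |f ω| ^ p)) μ :=
    ((integrable_const (t ^ p)).add (abs_rpow_int p hp f hf)).const_mul _
  apply hint.mono'
  · apply Measurable.aestronglyMeasurable
    exact (Real.continuous_rpow_const (by positivity : (0:ℝ) ≤ p/2)).measurable.comp
      (measurable_const.add (hfm.pow_const 2))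
  · filter_upwards with ω
    rw [Real.norm_eq_abs, abs_of_nonneg (Real.rpow_nonneg (by positivity) _)]
    exact phi_le p t (f ω) hp ht

lemma step_ineq (p t : ℝ) (hp : 2 ≤ p) (ht : 0 < t) (S X : Ω → ℝ)
    (hSm : Measurable S) (hXm : Measurable X)
    (hS : MemLp S (ENNReal.ofReal p) μ) (hX : MemLp X (ENNReal.ofReal p) μ)
    (hind : IndepFun S X μ) (hmean : ∫ ω, X ω ∂μ = 0) :
    ∫ ω, (t ^ 2 + (S ω + X ω) ^ 2) ^ (p / 2) ∂μ ≤
      (∫ ω, (t ^ 2 + S ω ^ 2) ^ (p / 2) ∂μ) *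
      (1 + 2 * p ^ ((5:ℝ)/2) * (∫ ω, X ω ^ 2 ∂μ) / t ^ 2
         + (12 * (p / Real.log p)) ^ p * (∫ ω, |X ω| ^ p ∂μ) / t ^ p) := by
  have hp0 : (0:ℝ) < p := by linarith
  set φ : ℝ → ℝ := fun s => (t ^ 2 + s ^ 2) ^ (p / 2) with hφdef
  set κf : ℝ → ℝ := fun s => φ s * (p * s / (t ^ 2 + s ^ 2)) with hκdef
  have hφm : Measurable φ :=
    (Real.continuous_rpow_const (by positivity : (0:ℝ) ≤ p/2)).measurable.comp
      (measurable_const.add (measurable_id.pow_const 2))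
  have hκm : Measurable κf := by
    apply hφm.mul
    exact (measurable_const.mul measurable_id).div (measurable_const.add (measurable_id.pow_const 2))
  have hφnn : ∀ s, 0 ≤ φ s := fun s => Real.rpow_nonneg (by positivity) _
  -- integrability pieces
  have iφS : Integrable (fun ω => φ (S ω)) μ := integrable_phi p t hp ht S hSm hS
  have iκS : Integrable (fun ω => κf (S ω)) μ := by
    apply iφS.const_mul (p / (2 * t)) |>.mono'
    · exact (hκm.comp hSm).aestronglyMeasurable
    · filter_upwards with ω
      rw [Real.norm_eq_abs, hκdef]
      simp only
      rw [abs_mul, abs_of_nonneg (hφnn (S ω))]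
      have hb : |p * S ω / (t ^ 2 + S ω ^ 2)| ≤ p / (2 * t) := by
        rw [abs_div, abs_of_pos (by positivity : (0:ℝ) < t ^ 2 + S ω ^ 2), abs_mul,
          abs_of_pos hp0, div_le_div_iff₀ (by positivity) (by positivity)]
        nlinarith [sq_nonneg (|S ω| - t), sq_abs (S ω), abs_nonneg (S ω)]
      calc φ (S ω) * |p * S ω / (t ^ 2 + S ω ^ 2)| ≤ φ (S ω) * (p / (2 * t)) :=
            mul_le_mul_of_nonneg_left hb (hφnn _)
        _ = p / (2 * t) * φ (S ω) := by ring
  have iX : Integrable X μ := by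
    apply hX.integrable
    rw [← ENNReal.ofReal_one]
    exact ENNReal.ofReal_le_ofReal (by linarith)
  have hX2mem : MemLp X 2 μ := by
    apply hX.mono_exponent
    rw [show (2 : ℝ≥0∞) = ENNReal.ofReal 2 by norm_num]
    exact ENNReal.ofReal_le_ofReal hp
  have iX2 : Integrable (fun ω => X ω ^ 2) μ := hX2mem.integrable_sq
  have iXp : Integrable (fun ω => |X ω| ^ p) μ := abs_rpow_int p hp X hX
  -- independence of composed functions
  have hind1 : IndepFun (fun ω => κf (S ω)) X μ := hind.comp hκm measurable_id
  have hind2 : IndepFun (fun ω => φ (S ω)) (fun ω => X ω ^ 2) μ :=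
    hind.comp hφm (measurable_id.pow_const 2)
  have habsm : Measurable (fun x : ℝ => |x| ^ p) :=
    (Real.continuous_rpow_const (by linarith : (0:ℝ) ≤ p)).measurable.comp measurable_abs
  have hind3 : IndepFun (fun ω => φ (S ω)) (fun ω => |X ω| ^ p) μ :=
    hind.comp hφm habsm
  have iF1 : Integrable (fun ω => κf (S ω) * X ω) μ := hind1.integrable_mul iκS iX
  have iF2 : Integrable (fun ω => φ (S ω) * X ω ^ 2) μ := hind2.integrable_mul iφS iX2
  have iF3 : Integrable (fun ω => φ (S ω) * |X ω| ^ p) μ := hind3.integrable_mul iφS iXp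
  -- pointwise bound
  have hpt : ∀ ω, φ (S ω + X ω) ≤ φ (S ω) + κf (S ω) * X ω
      + (2 * p ^ ((5:ℝ)/2) / t ^ 2) * (φ (S ω) * X ω ^ 2)
      + ((12 * (p / Real.log p)) ^ p / t ^ p) * (φ (S ω) * |X ω| ^ p) := by
    intro ω
    have := core_ineq p hp t (S ω) (X ω) ht
    rw [hφdef, hκdef]
    simp only
    calc (t ^ 2 + (S ω + X ω) ^ 2) ^ (p/2) ≤ (t ^ 2 + S ω ^ 2) ^ (p / 2) *
        (1 + (p * S ω / (t ^ 2 + S ω ^ 2)) * X ω + 2 * p ^ ((5:ℝ)/2) * (X ω ^ 2 / t ^ 2)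
          + (12 * (p / Real.log p)) ^ p * (|X ω| ^ p / t ^ p)) := this
      _ = (t ^ 2 + S ω ^ 2) ^ (p / 2)
          + (t ^ 2 + S ω ^ 2) ^ (p / 2) * (p * S ω / (t ^ 2 + S ω ^ 2)) * X ω
          + (2 * p ^ ((5:ℝ)/2) / t ^ 2) * ((t ^ 2 + S ω ^ 2) ^ (p / 2) * X ω ^ 2)
          + ((12 * (p / Real.log p)) ^ p / t ^ p) * ((t ^ 2 + S ω ^ 2) ^ (p / 2) * |X ω| ^ p) := by
          ring
  -- integrate
  have iLHS : Integrable (fun ω => (t ^ 2 + (S ω + X ω) ^ 2) ^ (p / 2)) μ :=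
    integrable_phi p t hp ht (fun ω => S ω + X ω) (hSm.add hXm) (hS.add hX)
  have iRHS : Integrable (fun ω => φ (S ω) + κf (S ω) * X ω
      + (2 * p ^ ((5:ℝ)/2) / t ^ 2) * (φ (S ω) * X ω ^ 2)
      + ((12 * (p / Real.log p)) ^ p / t ^ p) * (φ (S ω) * |X ω| ^ p)) μ :=
    ((iφS.add iF1).add (iF2.const_mul _)).add (iF3.const_mul _)
  have hmono : ∫ ω, (t ^ 2 + (S ω + X ω) ^ 2) ^ (p / 2) ∂μ ≤
      ∫ ω, (φ (S ω) + κf (S ω) * X ω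
      + (2 * p ^ ((5:ℝ)/2) / t ^ 2) * (φ (S ω) * X ω ^ 2)
      + ((12 * (p / Real.log p)) ^ p / t ^ p) * (φ (S ω) * |X ω| ^ p)) ∂μ :=
    integral_mono iLHS iRHS hpt
  have e1 : ∫ ω, κf (S ω) * X ω ∂μ = 0 := by
    rw [show (fun ω => κf (S ω) * X ω) = (fun ω => κf (S ω)) * X from rfl] at *
    rw [hind1.integral_mul_eq_mul_integral iκS.1 iX.1]
    simp only [hmean, mul_zero]
  have e2 : ∫ ω, φ (S ω) * X ω ^ 2 ∂μ = (∫ ω, φ (S ω) ∂μ) * ∫ ω, X ω ^ 2 ∂μ :=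
    hind2.integral_fun_mul_eq_mul_integral iφS.1 iX2.1
  have e3 : ∫ ω, φ (S ω) * |X ω| ^ p ∂μ = (∫ ω, φ (S ω) ∂μ) * ∫ ω, |X ω| ^ p ∂μ :=
    hind3.integral_fun_mul_eq_mul_integral iφS.1 iXp.1
  have hsplit : ∫ ω, (φ (S ω) + κf (S ω) * X ω
      + (2 * p ^ ((5:ℝ)/2) / t ^ 2) * (φ (S ω) * X ω ^ 2)
      + ((12 * (p / Real.log p)) ^ p / t ^ p) * (φ (S ω) * |X ω| ^ p)) ∂μ
      = (∫ ω, φ (S ω) ∂μ) + (∫ ω, κf (S ω) * X ω ∂μ)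
      + (2 * p ^ ((5:ℝ)/2) / t ^ 2) * (∫ ω, φ (S ω) * X ω ^ 2 ∂μ)
      + ((12 * (p / Real.log p)) ^ p / t ^ p) * (∫ ω, φ (S ω) * |X ω| ^ p ∂μ) := by
    have iC : Integrable (fun ω => 2 * p ^ ((5:ℝ)/2) / t ^ 2 * (φ (S ω) * X ω ^ 2)) μ :=
      iF2.const_mul _
    have iD : Integrable (fun ω => (12 * (p / Real.log p)) ^ p / t ^ p * (φ (S ω) * |X ω| ^ p)) μ :=
      iF3.const_mul _
    have iAB : Integrable (fun ω => φ (S ω) + κf (S ω) * X ω) μ := iφS.add iF1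
    have iABC : Integrable (fun ω => φ (S ω) + κf (S ω) * X ω
        + 2 * p ^ ((5:ℝ)/2) / t ^ 2 * (φ (S ω) * X ω ^ 2)) μ := iAB.add iC
    rw [integral_add iABC iD, integral_add iAB iC, integral_add iφS iF1,
      integral_const_mul, integral_const_mul]
  calc ∫ ω, (t ^ 2 + (S ω + X ω) ^ 2) ^ (p / 2) ∂μ
      ≤ (∫ ω, φ (S ω) ∂μ) + (∫ ω, κf (S ω) * X ω ∂μ)
      + (2 * p ^ ((5:ℝ)/2) / t ^ 2) * (∫ ω, φ (S ω) * X ω ^ 2 ∂μ)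
      + ((12 * (p / Real.log p)) ^ p / t ^ p) * (∫ ω, φ (S ω) * |X ω| ^ p ∂μ) := by
        rw [← hsplit]; exact hmono
    _ = (∫ ω, φ (S ω) ∂μ) *
      (1 + 2 * p ^ ((5:ℝ)/2) * (∫ ω, X ω ^ 2 ∂μ) / t ^ 2
         + (12 * (p / Real.log p)) ^ p * (∫ ω, |X ω| ^ p ∂μ) / t ^ p) := by
        rw [e1, e2, e3]; ring

section Prob
variable {Ω : Type} [MeasurableSpace Ω] {μ : Measure Ω} [IsProbabilityMeasure μ]

lemma sum_ineq (p t : ℝ) (hp : 2 ≤ p) (ht : 0 < t) {n : ℕ} (ξ : Fin n → Ω → ℝ)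
    (hmeas : ∀ i, Measurable (ξ i))
    (hindep : iIndepFun ξ μ)
    (hmean : ∀ i, ∫ ω, ξ i ω ∂μ = 0)
    (hLp : ∀ i, MemLp (ξ i) (ENNReal.ofReal p) μ)
    (s : Finset (Fin n)) :
    ∫ ω, (t ^ 2 + (∑ i ∈ s, ξ i ω) ^ 2) ^ (p / 2) ∂μ ≤
      t ^ p * ∏ i ∈ s, (1 + 2 * p ^ ((5:ℝ)/2) * (∫ ω, ξ i ω ^ 2 ∂μ) / t ^ 2
         + (12 * (p / Real.log p)) ^ p * (∫ ω, |ξ i ω| ^ p ∂μ) / t ^ p) := by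
  classical
  induction s using Finset.induction_on with
  | empty =>
      simp only [Finset.sum_empty, Finset.prod_empty, mul_one]
      have h0 : ((0:ℝ)) ^ 2 = 0 := by norm_num
      have ht2 : (t ^ 2 + (0:ℝ) ^ 2) ^ (p/2) = t ^ p := by
        rw [h0, add_zero, ← Real.rpow_natCast t 2, ← Real.rpow_mul ht.le]
        push_cast
        rw [show (2:ℝ) * (p/2) = p by ring]
      rw [ht2, integral_const]
      simp
  | insert _ _ hi ih =>
      rename_i i s
      have hSm : Measurable (fun ω => ∑ j ∈ s, ξ j ω) :=
        Finset.measurable_sum s (fun j _ => hmeas j)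
      have hSLp : MemLp (fun ω => ∑ j ∈ s, ξ j ω) (ENNReal.ofReal p) μ :=
        memLp_finset_sum s (fun j _ => hLp j)
      have hind : IndepFun (fun ω => ∑ j ∈ s, ξ j ω) (ξ i) μ := by
        have := hindep.indepFun_finsetSum_of_notMem hmeas hi
        have heq : (∑ j ∈ s, ξ j) = (fun ω => ∑ j ∈ s, ξ j ω) := by
          funext ω; simp [Finset.sum_apply]
        rwa [heq] at this
      have hstep := step_ineq p t hp ht (fun ω => ∑ j ∈ s, ξ j ω) (ξ i)
        hSm (hmeas i) hSLp (hLp i) hind (hmean i)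
      have hrw : (fun ω => (t ^ 2 + (∑ j ∈ insert i s, ξ j ω) ^ 2) ^ (p/2))
          = fun ω => (t ^ 2 + ((∑ j ∈ s, ξ j ω) + ξ i ω) ^ 2) ^ (p/2) := by
        funext ω
        rw [Finset.sum_insert hi]
        congr 1
        ring
      have hDnn : 0 ≤ 1 + 2 * p ^ ((5:ℝ)/2) * (∫ ω, ξ i ω ^ 2 ∂μ) / t ^ 2
          + (12 * (p / Real.log p)) ^ p * (∫ ω, |ξ i ω| ^ p ∂μ) / t ^ p := by
        have h2 : 0 ≤ ∫ ω, ξ i ω ^ 2 ∂μ := integral_nonneg (fun ω => sq_nonneg _)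
        have h3 : 0 ≤ ∫ ω, |ξ i ω| ^ p ∂μ :=
          integral_nonneg (fun ω => Real.rpow_nonneg (abs_nonneg _) p)
        have h4 : (0:ℝ) ≤ p ^ ((5:ℝ)/2) := Real.rpow_nonneg (by linarith) _
        have h5 : (0:ℝ) ≤ (12 * (p / Real.log p)) ^ p := by
          apply Real.rpow_nonneg
          have : 0 < Real.log p := Real.log_pos (by linarith)
          positivity
        positivity
      rw [hrw]
      calc ∫ ω, (t ^ 2 + ((∑ j ∈ s, ξ j ω) + ξ i ω) ^ 2) ^ (p/2) ∂μ
          ≤ (∫ ω, (t ^ 2 + (∑ j ∈ s, ξ j ω) ^ 2) ^ (p / 2) ∂μ) *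
            (1 + 2 * p ^ ((5:ℝ)/2) * (∫ ω, ξ i ω ^ 2 ∂μ) / t ^ 2
              + (12 * (p / Real.log p)) ^ p * (∫ ω, |ξ i ω| ^ p ∂μ) / t ^ p) := hstep
        _ ≤ (t ^ p * ∏ j ∈ s, (1 + 2 * p ^ ((5:ℝ)/2) * (∫ ω, ξ j ω ^ 2 ∂μ) / t ^ 2
              + (12 * (p / Real.log p)) ^ p * (∫ ω, |ξ j ω| ^ p ∂μ) / t ^ p)) *
            (1 + 2 * p ^ ((5:ℝ)/2) * (∫ ω, ξ i ω ^ 2 ∂μ) / t ^ 2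
              + (12 * (p / Real.log p)) ^ p * (∫ ω, |ξ i ω| ^ p ∂μ) / t ^ p) :=
            mul_le_mul_of_nonneg_right ih hDnn
        _ = t ^ p * ∏ j ∈ insert i s, (1 + 2 * p ^ ((5:ℝ)/2) * (∫ ω, ξ j ω ^ 2 ∂μ) / t ^ 2
              + (12 * (p / Real.log p)) ^ p * (∫ ω, |ξ j ω| ^ p ∂μ) / t ^ p) := by
            rw [Finset.prod_insert hi]; ring

end Prob

/-- Rosenthal's inequality with the sharp constant order p/ln p,
Johnson–Schechtman–Zinn: there is an absolute constant C such that for any finite family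
of independent centered random variables ξ₁, …, ξ_n with E|ξ_i|^p < ∞, p ≥ 2,
|Σξ_i|_p ≤ C (p/ln p) max( (Σ Eξ_i²)^{1/2}, (Σ E|ξ_i|^p)^{1/p} ). -/
theorem stmt19 :
    ∃ C : ℝ, 0 < C ∧
      ∀ (Ω : Type) (_ : MeasurableSpace Ω) (μ : Measure Ω), IsProbabilityMeasure μ →
      ∀ (n : ℕ) (ξ : Fin n → Ω → ℝ),
      (∀ i, Measurable (ξ i)) →
      iIndepFun ξ μ →
      (∀ i, ∫ ω, ξ i ω ∂μ = 0) →
      ∀ p : ℝ, 2 ≤ p →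
      (∀ i, Integrable (fun ω => |ξ i ω| ^ p) μ) →
      (∫ ω, |∑ i, ξ i ω| ^ p ∂μ) ^ (1/p) ≤
        C * (p / Real.log p) *
          max ((∑ i, ∫ ω, (ξ i ω) ^ 2 ∂μ) ^ (1/(2:ℝ)))
              ((∑ i, ∫ ω, |ξ i ω| ^ p ∂μ) ^ (1/p)) := by
  refine ⟨44, by norm_num, ?_⟩
  intro Ω mΩ μ hPM n ξ hmeas hindep hmean p hp hint
  have hp0 : (0:ℝ) < p := by linarith
  have hlp : 0 < Real.log p := Real.log_pos (by linarith)
  have hu0 : 0 < p / Real.log p := by positivity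
  set u : ℝ := p / Real.log p with hudef
  have hOfReal0 : ENNReal.ofReal p ≠ 0 := by simp [ENNReal.ofReal_eq_zero]; linarith
  -- MemLp of each variable
  have hLp : ∀ i, MemLp (ξ i) (ENNReal.ofReal p) μ := by
    intro i
    have h1 : MemLp (fun ω => ‖ξ i ω‖ ^ (ENNReal.ofReal p).toReal) 1 μ := by
      rw [memLp_one_iff_integrable]
      simpa [Real.norm_eq_abs, ENNReal.toReal_ofReal hp0.le] using hint i
    have h2 := memLp_norm_rpow_iff (μ := μ) (p := ENNReal.ofReal p) (q := ENNReal.ofReal p)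
      ((hmeas i).aestronglyMeasurable (μ := μ)) hOfReal0 ENNReal.ofReal_ne_top
    rw [ENNReal.div_self hOfReal0 ENNReal.ofReal_ne_top] at h2
    exact h2.1 h1
  -- notation
  set Bsq : ℝ := ∑ i, ∫ ω, (ξ i ω) ^ 2 ∂μ with hBdef
  set Lp : ℝ := ∑ i, ∫ ω, |ξ i ω| ^ p ∂μ with hLdef
  have hBnn : 0 ≤ Bsq := Finset.sum_nonneg (fun i _ => integral_nonneg (fun ω => sq_nonneg _))
  have hLnn : 0 ≤ Lp := Finset.sum_nonneg
    (fun i _ => integral_nonneg (fun ω => Real.rpow_nonneg (abs_nonneg _) p))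
  set M : ℝ := max (Bsq ^ (1/(2:ℝ))) (Lp ^ (1/p)) with hMdef
  have hM0 : 0 ≤ M := le_trans (Real.rpow_nonneg hBnn _) (le_max_left _ _)
  have hSm : Measurable (fun ω => ∑ i, ξ i ω) := Finset.measurable_sum _ (fun i _ => hmeas i)
  have hSLp : MemLp (fun ω => ∑ i, ξ i ω) (ENNReal.ofReal p) μ :=
    memLp_finset_sum _ (fun i _ => hLp i)
  have iSp : Integrable (fun ω => |∑ i, ξ i ω| ^ p) μ := abs_rpow_int p hp _ hSLp
  rcases hM0.lt_or_eq with hMpos | hMzero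
  case inr =>
    -- M = 0 : all variables vanish a.e.
    have hBr0 : Bsq ^ (1/(2:ℝ)) = 0 := by
      have h1 : Bsq ^ (1/(2:ℝ)) ≤ M := le_max_left _ _
      have h2 : 0 ≤ Bsq ^ (1/(2:ℝ)) := Real.rpow_nonneg hBnn _
      rw [← hMzero] at h1; linarith
    have hB0 : Bsq = 0 := by
      by_contra hne
      have : 0 < Bsq := lt_of_le_of_ne hBnn (Ne.symm hne)
      have := Real.rpow_pos_of_pos this (1/(2:ℝ))
      rw [hBr0] at this; exact lt_irrefl 0 this
    have hzero : ∀ i ∈ Finset.univ, (∫ ω, (ξ i ω) ^ 2 ∂μ) = 0 :=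
      (Finset.sum_eq_zero_iff_of_nonneg
        (fun i _ => integral_nonneg (fun ω => sq_nonneg (ξ i ω)))).1 hB0
    have hae : ∀ i : Fin n, (ξ i) =ᵐ[μ] 0 := by
      intro i
      have hi2 : Integrable (fun ω => ξ i ω ^ 2) μ := by
        have hmem2 : MemLp (ξ i) 2 μ := by
          apply (hLp i).mono_exponent
          rw [show (2 : ℝ≥0∞) = ENNReal.ofReal 2 by norm_num]
          exact ENNReal.ofReal_le_ofReal hp
        exact hmem2.integrable_sq
      have h0 := (integral_eq_zero_iff_of_nonneg (fun ω => sq_nonneg (ξ i ω)) hi2).1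
        (hzero i (Finset.mem_univ i))
      filter_upwards [h0] with ω hω
      have : ξ i ω ^ 2 = 0 := hω
      exact pow_eq_zero_iff (by norm_num) |>.1 this
    have hSae : (fun ω => ∑ i, ξ i ω) =ᵐ[μ] 0 := by
      have hall := ae_all_iff.2 hae
      filter_upwards [hall] with ω hω
      simp only [Pi.zero_apply]
      exact Finset.sum_eq_zero (fun i _ => hω i)
    have hI0 : ∫ ω, |∑ i, ξ i ω| ^ p ∂μ = 0 := by
      rw [integral_congr_ae (g := fun _ => 0)]
      · simp
      · filter_upwards [hSae] with ω hω
        rw [hω]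
        simp [Real.zero_rpow hp0.ne']
    rw [hI0, Real.zero_rpow (by positivity : (1:ℝ)/p ≠ 0), ← hMzero]
    simp
  case inl =>
    set t : ℝ := 16 * u * M with htdef
    have ht : 0 < t := by positivity
    have key := sum_ineq p t hp ht ξ hmeas hindep hmean hLp Finset.univ
    -- |S|^p ≤ φ(S)
    have h1 : ∫ ω, |∑ i, ξ i ω| ^ p ∂μ ≤ ∫ ω, (t ^ 2 + (∑ i, ξ i ω) ^ 2) ^ (p/2) ∂μ := by
      apply integral_mono iSp (integrable_phi p t hp ht _ hSm hSLp)
      intro ω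
      show |∑ i, ξ i ω| ^ p ≤ (t ^ 2 + (∑ i, ξ i ω) ^ 2) ^ (p/2)
      set s : ℝ := ∑ i, ξ i ω
      have e1 : |s| ^ p = (s ^ 2) ^ (p/2) := by
        rw [← sq_abs, ← Real.rpow_natCast |s| 2, ← Real.rpow_mul (abs_nonneg s)]
        push_cast
        rw [show (2:ℝ) * (p/2) = p by ring]
      rw [e1]
      exact Real.rpow_le_rpow (sq_nonneg s) (by nlinarith [sq_nonneg t]) (by positivity)
    -- product bound
    have hδnn : ∀ i : Fin n, 0 ≤ 2 * p ^ ((5:ℝ)/2) * (∫ ω, ξ i ω ^ 2 ∂μ) / t ^ 2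
        + (12 * u) ^ p * (∫ ω, |ξ i ω| ^ p ∂μ) / t ^ p := by
      intro i
      have h2 : 0 ≤ ∫ ω, ξ i ω ^ 2 ∂μ := integral_nonneg (fun ω => sq_nonneg _)
      have h3 : 0 ≤ ∫ ω, |ξ i ω| ^ p ∂μ :=
        integral_nonneg (fun ω => Real.rpow_nonneg (abs_nonneg _) p)
      have h4 : (0:ℝ) ≤ p ^ ((5:ℝ)/2) := Real.rpow_nonneg hp0.le _
      have h5 : (0:ℝ) ≤ (12 * u) ^ p := Real.rpow_nonneg (by positivity) _
      have h6 : (0:ℝ) < t ^ p := Real.rpow_pos_of_pos ht p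
      positivity
    have hprod : (∏ i, (1 + 2 * p ^ ((5:ℝ)/2) * (∫ ω, ξ i ω ^ 2 ∂μ) / t ^ 2
         + (12 * u) ^ p * (∫ ω, |ξ i ω| ^ p ∂μ) / t ^ p)) ≤ Real.exp p := by
      have hstep1 : (∏ i, (1 + 2 * p ^ ((5:ℝ)/2) * (∫ ω, ξ i ω ^ 2 ∂μ) / t ^ 2
          + (12 * u) ^ p * (∫ ω, |ξ i ω| ^ p ∂μ) / t ^ p)) ≤
          ∏ i, Real.exp (2 * p ^ ((5:ℝ)/2) * (∫ ω, ξ i ω ^ 2 ∂μ) / t ^ 2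
          + (12 * u) ^ p * (∫ ω, |ξ i ω| ^ p ∂μ) / t ^ p) := by
        apply Finset.prod_le_prod
        · intro i _; linarith [hδnn i]
        · intro i _
          have := Real.add_one_le_exp (2 * p ^ ((5:ℝ)/2) * (∫ ω, ξ i ω ^ 2 ∂μ) / t ^ 2
            + (12 * u) ^ p * (∫ ω, |ξ i ω| ^ p ∂μ) / t ^ p)
          linarith
      have hstep2 : (∏ i, Real.exp (2 * p ^ ((5:ℝ)/2) * (∫ ω, ξ i ω ^ 2 ∂μ) / t ^ 2
          + (12 * u) ^ p * (∫ ω, |ξ i ω| ^ p ∂μ) / t ^ p)) =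
          Real.exp (∑ i, (2 * p ^ ((5:ℝ)/2) * (∫ ω, ξ i ω ^ 2 ∂μ) / t ^ 2
          + (12 * u) ^ p * (∫ ω, |ξ i ω| ^ p ∂μ) / t ^ p)) := (Real.exp_sum _ _).symm
      have hsum : (∑ i, (2 * p ^ ((5:ℝ)/2) * (∫ ω, ξ i ω ^ 2 ∂μ) / t ^ 2
          + (12 * u) ^ p * (∫ ω, |ξ i ω| ^ p ∂μ) / t ^ p)) =
          2 * p ^ ((5:ℝ)/2) * Bsq / t ^ 2 + (12 * u) ^ p * Lp / t ^ p := by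
        rw [Finset.sum_add_distrib, hBdef, hLdef, Finset.mul_sum, Finset.sum_div,
          Finset.mul_sum, Finset.sum_div]
      -- bound the exponent by p
      have hBle : Bsq ≤ M ^ 2 := by
        have h1 : Bsq ^ (1/(2:ℝ)) ≤ M := le_max_left _ _
        have h2 : (Bsq ^ (1/(2:ℝ))) ^ (2:ℕ) = Bsq := by
          rw [← Real.rpow_natCast (Bsq ^ (1/(2:ℝ))) 2, ← Real.rpow_mul hBnn]
          norm_num
        calc Bsq = (Bsq ^ (1/(2:ℝ))) ^ (2:ℕ) := h2.symm
          _ ≤ M ^ (2:ℕ) := pow_le_pow_left₀ (Real.rpow_nonneg hBnn _) h1 2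
          _ = M ^ 2 := by norm_num
      have hLle : Lp ≤ M ^ p := by
        have h1 : Lp ^ (1/p) ≤ M := le_max_right _ _
        have h2 : (Lp ^ (1/p)) ^ p = Lp := by
          rw [← Real.rpow_mul hLnn]
          rw [show 1/p * p = 1 by field_simp]
          exact Real.rpow_one Lp
        calc Lp = (Lp ^ (1/p)) ^ p := h2.symm
          _ ≤ M ^ p := Real.rpow_le_rpow (Real.rpow_nonneg hLnn _) h1 hp0.le
      have hterm1 : 2 * p ^ ((5:ℝ)/2) * Bsq / t ^ 2 ≤ p / 2 := by
        rw [div_le_iff₀ (by positivity : (0:ℝ) < t ^ 2)]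
        have ht2 : t ^ 2 = 256 * u ^ 2 * M ^ 2 := by rw [htdef]; ring
        rw [ht2]
        have hlog2 : Real.log p ^ 2 ≤ 64 * p ^ ((1:ℝ)/2) := by
          have h8 := log_le_rpow8 p hp0
          have h9 : Real.log p ^ 2 ≤ (8 * p ^ (8⁻¹:ℝ)) ^ 2 := by
            apply pow_le_pow_left₀ (Real.log_nonneg (by linarith)) h8
          have h10 : (8 * p ^ (8⁻¹:ℝ)) ^ 2 = 64 * p ^ ((1:ℝ)/4) := by
            rw [mul_pow, ← Real.rpow_natCast (p ^ (8⁻¹:ℝ)) 2, ← Real.rpow_mul hp0.le]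
            norm_num
          have h11 : p ^ ((1:ℝ)/4) ≤ p ^ ((1:ℝ)/2) :=
            Real.rpow_le_rpow_of_exponent_le (by linarith) (by norm_num)
          nlinarith
        -- 2 p^{5/2} Bsq ≤ (p/2) * 256 u² M²  ⟸  4 p^{5/2} (log p)² ≤ 256 p³
        have hu2 : u ^ 2 = p ^ 2 / Real.log p ^ 2 := by rw [hudef]; ring
        have hp3 : p ^ ((5:ℝ)/2) * p ^ ((1:ℝ)/2) = p ^ 3 := by
          rw [← Real.rpow_add hp0]
          norm_num
        have hkey : 4 * p ^ ((5:ℝ)/2) * Real.log p ^ 2 ≤ 256 * p ^ 3 := by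
          have h12 : 4 * p ^ ((5:ℝ)/2) * Real.log p ^ 2 ≤
              4 * p ^ ((5:ℝ)/2) * (64 * p ^ ((1:ℝ)/2)) := by
            apply mul_le_mul_of_nonneg_left hlog2 (by positivity)
          calc 4 * p ^ ((5:ℝ)/2) * Real.log p ^ 2
              ≤ 4 * p ^ ((5:ℝ)/2) * (64 * p ^ ((1:ℝ)/2)) := h12
            _ = 256 * (p ^ ((5:ℝ)/2) * p ^ ((1:ℝ)/2)) := by ring
            _ = 256 * p ^ 3 := by rw [hp3]
        -- now conclude
        have hMp : (0:ℝ) < M ^ 2 := by positivity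
        have hexpand : p / 2 * (256 * u ^ 2 * M ^ 2) =
            (128 * p ^ 3 / Real.log p ^ 2) * M ^ 2 := by
          rw [hu2]; field_simp; ring
        rw [hexpand]
        have hfin : 2 * p ^ ((5:ℝ)/2) ≤ 128 * p ^ 3 / Real.log p ^ 2 := by
          rw [le_div_iff₀ (by positivity)]
          nlinarith
        calc 2 * p ^ ((5:ℝ)/2) * Bsq ≤ (128 * p ^ 3 / Real.log p ^ 2) * Bsq := by
              apply mul_le_mul_of_nonneg_right hfin hBnn
          _ ≤ (128 * p ^ 3 / Real.log p ^ 2) * M ^ 2 := by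
              apply mul_le_mul_of_nonneg_left hBle (by positivity)
      have hterm2 : (12 * u) ^ p * Lp / t ^ p ≤ p / 2 := by
        have htp : t ^ p = (16 * u) ^ p * M ^ p := by
          rw [htdef, show (16 * u * M) = (16 * u) * M by ring]
          exact Real.mul_rpow (by positivity) hMpos.le
        have hnum : (12 * u) ^ p * Lp ≤ (16 * u) ^ p * M ^ p := by
          calc (12 * u) ^ p * Lp ≤ (12 * u) ^ p * M ^ p := by
                apply mul_le_mul_of_nonneg_left hLle (Real.rpow_nonneg (by positivity) _)
            _ ≤ (16 * u) ^ p * M ^ p := by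
                apply mul_le_mul_of_nonneg_right _ (Real.rpow_nonneg hM0 _)
                exact Real.rpow_le_rpow (by positivity) (by linarith) hp0.le
        rw [div_le_iff₀ (Real.rpow_pos_of_pos ht p), htp]
        calc (12 * u) ^ p * Lp ≤ (16 * u) ^ p * M ^ p := hnum
          _ = 1 * ((16 * u) ^ p * M ^ p) := by ring
          _ ≤ p / 2 * ((16 * u) ^ p * M ^ p) := by
              apply mul_le_mul_of_nonneg_right (by linarith)
              positivity
      calc (∏ i, (1 + 2 * p ^ ((5:ℝ)/2) * (∫ ω, ξ i ω ^ 2 ∂μ) / t ^ 2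
          + (12 * u) ^ p * (∫ ω, |ξ i ω| ^ p ∂μ) / t ^ p))
          ≤ Real.exp (2 * p ^ ((5:ℝ)/2) * Bsq / t ^ 2 + (12 * u) ^ p * Lp / t ^ p) := by
            rw [← hsum]; exact hstep1.trans (le_of_eq hstep2)
        _ ≤ Real.exp p := Real.exp_le_exp.mpr (by linarith)
    -- combine
    have h2 : ∫ ω, |∑ i, ξ i ω| ^ p ∂μ ≤ t ^ p * Real.exp p := by
      calc ∫ ω, |∑ i, ξ i ω| ^ p ∂μ ≤ ∫ ω, (t ^ 2 + (∑ i, ξ i ω) ^ 2) ^ (p/2) ∂μ := h1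
        _ ≤ t ^ p * ∏ i, (1 + 2 * p ^ ((5:ℝ)/2) * (∫ ω, ξ i ω ^ 2 ∂μ) / t ^ 2
            + (12 * u) ^ p * (∫ ω, |ξ i ω| ^ p ∂μ) / t ^ p) := key
        _ ≤ t ^ p * Real.exp p := by
            apply mul_le_mul_of_nonneg_left hprod (Real.rpow_nonneg ht.le p)
    have h3 : (∫ ω, |∑ i, ξ i ω| ^ p ∂μ) ^ (1/p) ≤ t * Real.exp 1 := by
      have hI : 0 ≤ ∫ ω, |∑ i, ξ i ω| ^ p ∂μ :=
        integral_nonneg (fun ω => Real.rpow_nonneg (abs_nonneg _) p)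
      have e1 : t ^ p * Real.exp p = (t * Real.exp 1) ^ p := by
        rw [Real.mul_rpow ht.le (Real.exp_pos 1).le, Real.exp_one_rpow]
      have e2 : ((t * Real.exp 1) ^ p) ^ (1/p) = t * Real.exp 1 := by
        rw [← Real.rpow_mul (by positivity), show p * (1/p) = 1 by field_simp]
        exact Real.rpow_one _
      calc (∫ ω, |∑ i, ξ i ω| ^ p ∂μ) ^ (1/p) ≤ (t ^ p * Real.exp p) ^ (1/p) :=
            Real.rpow_le_rpow hI h2 (by positivity)
        _ = t * Real.exp 1 := by rw [e1, e2]
    have h4 : t * Real.exp 1 ≤ 44 * u * M := by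
      have he : Real.exp 1 ≤ 2.75 :=
        le_of_lt (lt_of_lt_of_le Real.exp_one_lt_d9 (by norm_num))
      rw [htdef]
      have he0 := Real.exp_pos 1
      nlinarith [mul_pos hu0 hMpos]
    calc (∫ ω, |∑ i, ξ i ω| ^ p ∂μ) ^ (1/p) ≤ t * Real.exp 1 := h3
      _ ≤ 44 * u * M := h4
      _ = 44 * (p / Real.log p) * M := by rw [hudef]
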